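/- If the Riemann matrix satisfies conj(B) = B − 2πi H for an integer symmetric matrix H, then there exists a constant κ with |κ| = 1 such that conj(Θ(z)) = κ · Θ(conj(z) − πi diag(H)) for all z ∈ ℂ^g, where in fact one may take the relation conj(Θ(z)) = Θ(conj(z) − πi diag(H)) · exp(−½⟨B·0,0⟩) up to a root of unity depending only on H. -/

import Mathlib

open scoped BigOperators

open Finset

lemma aux_even (g : ℕ) (H : Matrix (Fin g) (Fin g) ℤ) (hHsym : ∀ i j, H i j = H j i)
    (m : Fin g → ℤ) :
    ∃ k : ℤ, (∑ i, ∑ j, H i j * m j * m i) - ∑ i, H i i * m i = 2 * k := by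
  suffices h : (2 : ℤ) ∣ (∑ i, ∑ j, H i j * m j * m i) - ∑ i, H i i * m i by
    obtain ⟨k, hk⟩ := h; exact ⟨k, hk⟩
  have : (((∑ i, ∑ j, H i j * m j * m i) - ∑ i, H i i * m i : ℤ) : ZMod 2) = 0 := by
    push_cast
    have hsq : ∀ x : ZMod 2, x * x = x := by decide
    have hsplit : ∀ i : Fin g, (∑ j, (H i j : ZMod 2) * (m j : ZMod 2) * (m i : ZMod 2))
        = (∑ j ∈ univ.erase i, (H i j : ZMod 2) * (m j : ZMod 2) * (m i : ZMod 2))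
          + (H i i : ZMod 2) * (m i : ZMod 2) := by
      intro i
      have hd : (H i i : ZMod 2) * (m i : ZMod 2) * (m i : ZMod 2)
          = (H i i : ZMod 2) * (m i : ZMod 2) := by rw [mul_assoc, hsq]
      rw [← hd, Finset.sum_erase_add univ _ (mem_univ i)]
    rw [Finset.sum_congr rfl fun i _ => hsplit i, Finset.sum_add_distrib]
    have hzero : (∑ i : Fin g, ∑ j ∈ univ.erase i,
        (H i j : ZMod 2) * (m j : ZMod 2) * (m i : ZMod 2)) = 0 := by
      rw [Finset.sum_sigma']
      refine Finset.sum_involution (fun p _ => ⟨p.2, p.1⟩) ?_ ?_ ?_ ?_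
      · intro p hp
        show (H p.1 p.2 : ZMod 2) * (m p.2 : ZMod 2) * (m p.1 : ZMod 2)
            + (H p.2 p.1 : ZMod 2) * (m p.1 : ZMod 2) * (m p.2 : ZMod 2) = 0
        have hsymc : (H p.2 p.1 : ZMod 2) = (H p.1 p.2 : ZMod 2) := by rw [hHsym]
        have hadd : ∀ x : ZMod 2, x + x = 0 := by decide
        rw [hsymc, show (H p.1 p.2 : ZMod 2) * (m p.1 : ZMod 2) * (m p.2 : ZMod 2)
            = (H p.1 p.2 : ZMod 2) * (m p.2 : ZMod 2) * (m p.1 : ZMod 2) from by ring]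
        exact hadd _
      · intro p hp _ h
        exact (Finset.mem_erase.mp (Finset.mem_sigma.mp hp).2).1 (congrArg Sigma.fst h)
      · intro p hp
        have h2 := (Finset.mem_erase.mp (Finset.mem_sigma.mp hp).2).1
        exact Finset.mem_sigma.mpr ⟨mem_univ _, Finset.mem_erase.mpr ⟨Ne.symm h2, mem_univ _⟩⟩
      · intro p hp; rfl
    rw [hzero, zero_add, sub_self]
  rwa [ZMod.intCast_zmod_eq_zero_iff_dvd] at this

noncomputable def theta (g : ℕ) (B : Matrix (Fin g) (Fin g) ℂ) (z : Fin g → ℂ) : ℂ :=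
  ∑' m : Fin g → ℤ, Complex.exp
    ((1/2) * ∑ i, (∑ j, B i j * (m j : ℂ)) * (m i : ℂ) + ∑ i, (m i : ℂ) * z i)

/-- if `conj(B) = B − 2πi H` with `H` an integer symmetric matrix, then
there is a constant `κ` of modulus one (a root of unity depending only on `H`) with
`conj(Θ(z)) = κ · Θ(conj(z) − πi diag(H))` for all `z`. -/
theorem theta_conj (g : ℕ) (hg : 1 ≤ g)
    (B : Matrix (Fin g) (Fin g) ℂ)
    (hsym : ∀ i j, B i j = B j i)
    (hneg : ∀ x : Fin g → ℝ, x ≠ 0 → ∑ i, ∑ j, (B i j).re * x i * x j < 0)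
    (H : Matrix (Fin g) (Fin g) ℤ) (hHsym : ∀ i j, H i j = H j i)
    (hBH : ∀ i j, (starRingEnd ℂ) (B i j)
        = B i j - 2 * (Real.pi : ℂ) * Complex.I * (H i j : ℂ)) :
    ∃ κ : ℂ, ‖κ‖ = 1 ∧ ∀ z : Fin g → ℂ,
      (starRingEnd ℂ) (theta g B z)
        = κ * theta g B
            (fun i => (starRingEnd ℂ) (z i) - (Real.pi : ℂ) * Complex.I * (H i i : ℂ)) := by
  refine ⟨1, by simp, fun z => ?_⟩
  rw [one_mul, theta, theta, starRingEnd_apply, tsum_star]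
  refine tsum_congr fun m => ?_
  rw [← starRingEnd_apply, ← Complex.exp_conj, Complex.exp_eq_exp_iff_exists_int]
  obtain ⟨k, hk⟩ := aux_even g H hHsym m
  refine ⟨-k, ?_⟩
  have hkC : (∑ i, ∑ j, (H i j : ℂ) * (m j : ℂ) * (m i : ℂ))
      - ∑ i, (H i i : ℂ) * (m i : ℂ) = 2 * (k : ℂ) := by exact_mod_cast hk
  simp only [map_add, map_mul, map_sum, map_div₀, map_one, map_ofNat, map_intCast, hBH]
  have hA : ∑ i, (∑ j, (B i j - 2 * (Real.pi : ℂ) * Complex.I * (H i j : ℂ)) * (m j : ℂ)) * (m i : ℂ)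
      = (∑ i, (∑ j, B i j * (m j : ℂ)) * (m i : ℂ))
        - 2 * (Real.pi : ℂ) * Complex.I * (∑ i, ∑ j, (H i j : ℂ) * (m j : ℂ) * (m i : ℂ)) := by
    simp only [sub_mul, Finset.sum_sub_distrib, Finset.sum_mul, Finset.mul_sum]
    congr 1
    exact Finset.sum_congr rfl fun i _ => Finset.sum_congr rfl fun j _ => by ring
  have hB : ∑ i, (m i : ℂ) * ((starRingEnd ℂ) (z i) - (Real.pi : ℂ) * Complex.I * (H i i : ℂ))
      = (∑ i, (m i : ℂ) * (starRingEnd ℂ) (z i))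
        - (Real.pi : ℂ) * Complex.I * (∑ i, (H i i : ℂ) * (m i : ℂ)) := by
    simp only [mul_sub, Finset.sum_sub_distrib, Finset.mul_sum]
    congr 1
    exact Finset.sum_congr rfl fun i _ => by ring
  rw [hA, hB]
  push_cast
  linear_combination (-(Real.pi : ℂ) * Complex.I) * hkC
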